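/- Let l1, l2, l3 > 0 with l1 + l2 + l3 = 1 and 0 ≤ τ ≤ 1/2, and let F = F_τ^{l1,l2,l3}. Then there exists a nonempty open arc I of ℝ/ℤ on which F² restricts to the identity if and only if τ < max(l1,l2,l3). -/
import Mathlib

open Set

noncomputable section

local instance : Fact ((0:ℝ) < 1) := ⟨one_pos⟩

/-- Representative in `[0,1)` of a point of the circle `ℝ/ℤ`. -/
def rep (x : AddCircle (1:ℝ)) : ℝ := (AddCircle.equivIco 1 0 x : ℝ)

/-- Projection `ℝ → ℝ/ℤ`. -/
def toCirc (t : ℝ) : AddCircle (1:ℝ) := (t : AddCircle (1:ℝ))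

/-- The fully flipped 3-interval exchange transformation `F_τ^{l1,l2,l3}`
(it depends only on `l1`, `l2`, `τ`, since `l3 = 1 - l1 - l2`). -/
def FF (l1 l2 τ : ℝ) (x : AddCircle (1:ℝ)) : AddCircle (1:ℝ) :=
  if rep x < l1 then toCirc (l1 - rep x + τ)
  else if rep x < l1 + l2 then toCirc (2*l1 + l2 - rep x + τ)
  else toCirc (l1 + l2 + 1 - rep x + τ)

/-- A nonempty open arc of the circle `ℝ/ℤ`. -/
def IsOpenArc (I : Set (AddCircle (1:ℝ))) : Prop :=
  ∃ a b : ℝ, a < b ∧ b ≤ a + 1 ∧ I = toCirc '' Ioo a b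

lemma rep_toCirc (t : ℝ) : rep (toCirc t) = Int.fract t := by
  simp [rep, toCirc, AddCircle.coe_equivIco_mk_apply]

lemma toCirc_rep (x : AddCircle (1:ℝ)) : toCirc (rep x) = x := by
  have := (AddCircle.equivIco 1 0).left_inv x
  simpa [toCirc, rep, AddCircle.equivIco, QuotientAddGroup.equivIcoMod] using this

lemma coe_eq_iff (t s : ℝ) : toCirc t = toCirc s ↔ ∃ n : ℤ, t - s = n := by
  simp only [toCirc, AddCircle, QuotientAddGroup.eq_iff_sub_mem,
    AddSubgroup.mem_zmultiples_iff, zsmul_eq_mul, mul_one]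
  exact ⟨fun ⟨n, h⟩ => ⟨n, h.symm⟩, fun ⟨n, h⟩ => ⟨n, h.symm⟩⟩

lemma no_int01 {d : ℝ} (h0 : 0 < d) (h1 : d < 1) (m : ℤ) (h : (m:ℝ) = d) : False := by
  have h0' : (0:ℤ) < m := by exact_mod_cast h ▸ h0
  have h1' : m < 1 := by exact_mod_cast h ▸ h1
  omega

lemma fract_of_one_le {v : ℝ} (h1 : 1 ≤ v) (h2 : v < 2) : Int.fract v = v - 1 := by
  have h := Int.fract_sub_intCast v 1
  rw [← h]; push_cast
  exact Int.fract_eq_self.2 ⟨by linarith, by linarith⟩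

/-- For `0 ≤ τ ≤ 1/2`, `F_τ^{l1,l2,l3}` has a `2`-periodic interval iff
`τ < max (l1, l2, l3)`. -/
theorem statement11 (l1 l2 l3 τ : ℝ)
    (h1 : 0 < l1) (h2 : 0 < l2) (h3 : 0 < l3) (hsum : l1 + l2 + l3 = 1)
    (hτ0 : 0 ≤ τ) (hτ : τ ≤ 1/2) :
    (∃ I : Set (AddCircle (1:ℝ)), IsOpenArc I ∧
        ∀ x ∈ I, FF l1 l2 τ (FF l1 l2 τ x) = x) ↔
      τ < max l1 (max l2 l3) := by
  have hl1 : l1 < 1 := by linarith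
  have hl12 : l1 + l2 < 1 := by linarith
  constructor
  · rintro ⟨I, ⟨a, b, hab, hba, hI⟩, hper⟩
    -- find a point of the arc whose representative avoids 0, l1, l1+l2
    have key : ∃ s ∈ Ioo a b, Int.fract s ∉ ({0, l1, l1 + l2} : Finset ℝ) := by
      by_contra hcon
      push_neg at hcon
      set f : Fin 4 → ℝ := fun k => a + (b - a) * (((k:ℕ):ℝ) + 1) / 5 with hf
      have hmem : ∀ k : Fin 4, f k ∈ Ioo a b := by
        intro k
        have hk0 : (0:ℝ) ≤ ((k:ℕ):ℝ) := Nat.cast_nonneg _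
        have hk3 : ((k:ℕ):ℝ) ≤ 3 := by
          have := k.isLt; exact_mod_cast Nat.lt_succ_iff.mp (by exact_mod_cast this)
        constructor
        · have : 0 < (b - a) * (((k:ℕ):ℝ) + 1) / 5 := by
            apply div_pos (mul_pos (by linarith) (by linarith)) (by norm_num)
          simp only [hf]; linarith
        · simp only [hf]; nlinarith
      have hcard : ({0, l1, l1 + l2} : Finset ℝ).card < (Finset.univ : Finset (Fin 4)).card := by
        rw [Finset.card_univ, Fintype.card_fin]
        have := Finset.card_insert_le (0:ℝ) ({l1, l1 + l2} : Finset ℝ)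
        have := Finset.card_insert_le l1 ({l1 + l2} : Finset ℝ)
        simp only [Finset.card_singleton] at *
        omega
      obtain ⟨i, -, j, -, hij, heq⟩ :=
        Finset.exists_ne_map_eq_of_card_lt_of_maps_to hcard
          (fun k _ => hcon (f k) (hmem k))
      obtain ⟨z, hz⟩ := Int.fract_eq_fract.1 heq
      have hi3 : ((i:ℕ):ℝ) ≤ 3 := by
        have := i.isLt; exact_mod_cast Nat.lt_succ_iff.mp (by exact_mod_cast this)
      have hj3 : ((j:ℕ):ℝ) ≤ 3 := by
        have := j.isLt; exact_mod_cast Nat.lt_succ_iff.mp (by exact_mod_cast this)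
      have hi0 : (0:ℝ) ≤ ((i:ℕ):ℝ) := Nat.cast_nonneg _
      have hj0 : (0:ℝ) ≤ ((j:ℕ):ℝ) := Nat.cast_nonneg _
      have hzval : (z:ℝ) * 5 = (b - a) * (((i:ℕ):ℝ) - ((j:ℕ):ℝ)) := by
        simp only [hf] at hz; linear_combination -5 * hz
      have hz0 : z = 0 := by
        have hub : (z:ℝ) < 1 := by nlinarith
        have hlb : (-1:ℝ) < (z:ℝ) := by nlinarith
        have hub' : z < 1 := by exact_mod_cast hub
        have hlb' : (-1:ℤ) < z := by exact_mod_cast hlb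
        omega
      rw [hz0] at hzval
      norm_num at hzval
      have hcc : ((i:ℕ):ℝ) = ((j:ℕ):ℝ) := by
        rcases hzval with h | h
        · exfalso; linarith
        · linarith
      exact hij (Fin.ext (by exact_mod_cast hcc))
    obtain ⟨s, hs, hgood⟩ := key
    simp only [Finset.mem_insert, Finset.mem_singleton, not_or] at hgood
    obtain ⟨hg0, hg1, hg12⟩ := hgood
    set x := toCirc s with hxdef
    have hxI : x ∈ I := hI ▸ ⟨s, hs, rfl⟩
    have hx := hper x hxI
    have hrep : rep x = Int.fract s := rep_toCirc s
    set r := Int.fract s with hrdef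
    have hr0 : 0 ≤ r := Int.fract_nonneg s
    have hr1 : r < 1 := Int.fract_lt_one s
    have hxr : x = toCirc r := by rw [← toCirc_rep x, hrep]
    rcases lt_or_ge r l1 with hA | hge1
    · -- r ∈ (0, l1)
      have hrpos : 0 < r := lt_of_le_of_ne hr0 (Ne.symm hg0)
      have hFx : FF l1 l2 τ x = toCirc (l1 - r + τ) := by
        simp only [FF, hrep]; rw [if_pos hA]
      set v := l1 - r + τ with hvdef
      set w := rep (FF l1 l2 τ x) with hwdef
      have hwf : w = Int.fract v := by rw [hwdef, hFx, rep_toCirc]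
      have hx3 : (if w < l1 then toCirc (l1 - w + τ)
          else if w < l1 + l2 then toCirc (2*l1 + l2 - w + τ)
          else toCirc (l1 + l2 + 1 - w + τ)) = toCirc r := by
        rw [← hxr]; exact hx
      have hvfl : w = v - (⌊v⌋:ℝ) := by rw [hwf, ← Int.self_sub_floor]
      rcases lt_or_ge w l1 with hw1 | hw1
      · -- same interval: conclude τ < l1
        have : τ < l1 := by
          rcases lt_or_ge v 1 with hv | hv
          · have hwv : w = v := by
              rw [hwf]; exact Int.fract_eq_self.2 ⟨by linarith, hv⟩
            linarith [hwv ▸ hw1]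
          · linarith
        exact lt_max_of_lt_left this
      rcases lt_or_ge w (l1 + l2) with hw2 | hw2
      · exfalso
        rw [if_neg (not_lt.2 hw1), if_pos hw2] at hx3
        obtain ⟨n, hn⟩ := (coe_eq_iff _ _).1 hx3
        exact no_int01 (by linarith : (0:ℝ) < l1 + l2) hl12 (n - ⌊v⌋) (by push_cast; linarith)
      · exfalso
        rw [if_neg (not_lt.2 hw1), if_neg (not_lt.2 hw2)] at hx3
        obtain ⟨n, hn⟩ := (coe_eq_iff _ _).1 hx3
        exact no_int01 h2 (by linarith) (n - ⌊v⌋ - 1) (by push_cast; linarith)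
    rcases lt_or_ge r (l1 + l2) with hB | hge2
    · -- r ∈ (l1, l1+l2)
      have hrgt : l1 < r := lt_of_le_of_ne hge1 (Ne.symm hg1)
      have hFx : FF l1 l2 τ x = toCirc (2*l1 + l2 - r + τ) := by
        simp only [FF, hrep]; rw [if_neg (not_lt.2 hge1), if_pos hB]
      set v := 2*l1 + l2 - r + τ with hvdef
      set w := rep (FF l1 l2 τ x) with hwdef
      have hwf : w = Int.fract v := by rw [hwdef, hFx, rep_toCirc]
      have hx3 : (if w < l1 then toCirc (l1 - w + τ)
          else if w < l1 + l2 then toCirc (2*l1 + l2 - w + τ)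
          else toCirc (l1 + l2 + 1 - w + τ)) = toCirc r := by
        rw [← hxr]; exact hx
      have hvfl : w = v - (⌊v⌋:ℝ) := by rw [hwf, ← Int.self_sub_floor]
      have hv0 : 0 < v := by simp only [hvdef]; linarith
      have hv2 : v < 2 := by simp only [hvdef]; linarith
      rcases lt_or_ge w l1 with hw1 | hw1
      · exfalso
        rw [if_pos hw1] at hx3
        obtain ⟨n, hn⟩ := (coe_eq_iff _ _).1 hx3
        exact no_int01 (by linarith : (0:ℝ) < l1 + l2) hl12 (⌊v⌋ - n) (by push_cast; linarith)
      rcases lt_or_ge w (l1 + l2) with hw2 | hw2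
      · -- same interval: conclude τ < l2
        have : τ < l2 := by
          rcases lt_or_ge v 1 with hv | hv
          · have hwv : w = v := by
              rw [hwf]; exact Int.fract_eq_self.2 ⟨by linarith, hv⟩
            rw [hwv] at hw2; simp only [hvdef] at hw2; linarith
          · have hwv : w = v - 1 := by rw [hwf]; exact fract_of_one_le hv hv2
            rw [hwv] at hw1; simp only [hvdef] at hw1; linarith
        exact lt_max_of_lt_right (lt_max_of_lt_left this)
      · exfalso
        rw [if_neg (not_lt.2 hw1), if_neg (not_lt.2 hw2)] at hx3
        obtain ⟨n, hn⟩ := (coe_eq_iff _ _).1 hx3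
        exact no_int01 h1 hl1 (⌊v⌋ - n + 1) (by push_cast; linarith)
    · -- r ∈ (l1+l2, 1)
      have hrgt : l1 + l2 < r := lt_of_le_of_ne hge2 (Ne.symm hg12)
      have hFx : FF l1 l2 τ x = toCirc (l1 + l2 + 1 - r + τ) := by
        simp only [FF, hrep]; rw [if_neg (not_lt.2 (by linarith)), if_neg (not_lt.2 hge2)]
      set v := l1 + l2 + 1 - r + τ with hvdef
      set w := rep (FF l1 l2 τ x) with hwdef
      have hwf : w = Int.fract v := by rw [hwdef, hFx, rep_toCirc]
      have hx3 : (if w < l1 then toCirc (l1 - w + τ)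
          else if w < l1 + l2 then toCirc (2*l1 + l2 - w + τ)
          else toCirc (l1 + l2 + 1 - w + τ)) = toCirc r := by
        rw [← hxr]; exact hx
      have hvfl : w = v - (⌊v⌋:ℝ) := by rw [hwf, ← Int.self_sub_floor]
      have hv0 : 0 < v := by simp only [hvdef]; linarith
      have hv2 : v < 2 := by simp only [hvdef]; linarith
      rcases lt_or_ge w l1 with hw1 | hw1
      · exfalso
        rw [if_pos hw1] at hx3
        obtain ⟨n, hn⟩ := (coe_eq_iff _ _).1 hx3
        exact no_int01 h2 (by linarith) (⌊v⌋ - n - 1) (by push_cast; linarith)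
      rcases lt_or_ge w (l1 + l2) with hw2 | hw2
      · exfalso
        rw [if_neg (not_lt.2 hw1), if_pos hw2] at hx3
        obtain ⟨n, hn⟩ := (coe_eq_iff _ _).1 hx3
        exact no_int01 h1 hl1 (n - ⌊v⌋ + 1) (by push_cast; linarith)
      · -- same interval: conclude τ < l3
        have : τ < l3 := by
          rcases lt_or_ge v 1 with hv | hv
          · have hwv : w = v := by
              rw [hwf]; exact Int.fract_eq_self.2 ⟨by linarith, hv⟩
            simp only [hvdef] at hv; linarith
          · have hwv : w = v - 1 := by rw [hwf]; exact fract_of_one_le hv hv2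
            rw [hwv] at hw2; simp only [hvdef] at hw2; linarith
        exact lt_max_of_lt_right (lt_max_of_lt_right this)
  · intro h
    rcases lt_max_iff.1 h with hc | h'
    · -- τ < l1 : the arc (τ, l1)
      refine ⟨toCirc '' Ioo τ l1, ⟨τ, l1, hc, by linarith, rfl⟩, ?_⟩
      rintro x ⟨t, ⟨ht1, ht2⟩, rfl⟩
      have hrt : rep (toCirc t) = t := by
        rw [rep_toCirc]; exact Int.fract_eq_self.2 ⟨by linarith, by linarith⟩
      have hb1 : FF l1 l2 τ (toCirc t) = toCirc (l1 - t + τ) := by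
        simp only [FF, hrt]; rw [if_pos ht2]
      have hru : rep (toCirc (l1 - t + τ)) = l1 - t + τ := by
        rw [rep_toCirc]; exact Int.fract_eq_self.2 ⟨by linarith, by linarith⟩
      have hb2 : FF l1 l2 τ (toCirc (l1 - t + τ)) = toCirc (l1 - (l1 - t + τ) + τ) := by
        simp only [FF, hru]; rw [if_pos (by linarith : l1 - t + τ < l1)]
      rw [hb1, hb2]; congr 1; ring
    rcases lt_max_iff.1 h' with hc | hc
    · -- τ < l2 : the arc (l1+τ, l1+l2)
      refine ⟨toCirc '' Ioo (l1 + τ) (l1 + l2), ⟨l1 + τ, l1 + l2, by linarith, by linarith, rfl⟩, ?_⟩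
      rintro x ⟨t, ⟨ht1, ht2⟩, rfl⟩
      have hrt : rep (toCirc t) = t := by
        rw [rep_toCirc]; exact Int.fract_eq_self.2 ⟨by linarith, by linarith⟩
      have hb1 : FF l1 l2 τ (toCirc t) = toCirc (2*l1 + l2 - t + τ) := by
        simp only [FF, hrt]; rw [if_neg (not_lt.2 (by linarith)), if_pos ht2]
      have hru : rep (toCirc (2*l1 + l2 - t + τ)) = 2*l1 + l2 - t + τ := by
        rw [rep_toCirc]; exact Int.fract_eq_self.2 ⟨by linarith, by linarith⟩
      have hb2 : FF l1 l2 τ (toCirc (2*l1 + l2 - t + τ))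
          = toCirc (2*l1 + l2 - (2*l1 + l2 - t + τ) + τ) := by
        simp only [FF, hru]
        rw [if_neg (not_lt.2 (by linarith)), if_pos (by linarith : 2*l1 + l2 - t + τ < l1 + l2)]
      rw [hb1, hb2]; congr 1; ring
    · -- τ < l3 : the arc (l1+l2+τ, 1)
      refine ⟨toCirc '' Ioo (l1 + l2 + τ) 1, ⟨l1 + l2 + τ, 1, by linarith, by linarith, rfl⟩, ?_⟩
      rintro x ⟨t, ⟨ht1, ht2⟩, rfl⟩
      have hrt : rep (toCirc t) = t := by
        rw [rep_toCirc]; exact Int.fract_eq_self.2 ⟨by linarith, by linarith⟩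
      have hb1 : FF l1 l2 τ (toCirc t) = toCirc (l1 + l2 + 1 - t + τ) := by
        simp only [FF, hrt]
        rw [if_neg (not_lt.2 (by linarith)), if_neg (not_lt.2 (by linarith))]
      have hru : rep (toCirc (l1 + l2 + 1 - t + τ)) = l1 + l2 + 1 - t + τ := by
        rw [rep_toCirc]; exact Int.fract_eq_self.2 ⟨by linarith, by linarith⟩
      have hb2 : FF l1 l2 τ (toCirc (l1 + l2 + 1 - t + τ))
          = toCirc (l1 + l2 + 1 - (l1 + l2 + 1 - t + τ) + τ) := by
        simp only [FF, hru]
        rw [if_neg (not_lt.2 (by linarith)), if_neg (not_lt.2 (by linarith))]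
      rw [hb1, hb2]; congr 1; ring
end
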